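/- Let G be a finite p-group of order p^n with coclass 2 and |Z(G)| = p. Then |Z_2(G)/Z(G)| divides p^2, i.e. the second center Z_2(G) has order at most p^3. -/

import Mathlib

open Subgroup

section AuxLemmas

universe u

/-- Strictness of the upper central series below the nilpotency class. -/
lemma ucs_strict_aux {H : Type u} [Group H] [Group.IsNilpotent H] {i : ℕ}
    (h : i < Group.nilpotencyClass H) :
    Subgroup.upperCentralSeries H i ≠ Subgroup.upperCentralSeries H (i + 1) := by
  intro heq
  have hstab : ∀ m, Subgroup.upperCentralSeries H (i + m) = Subgroup.upperCentralSeries H i := by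
    intro m
    induction m with
    | zero => rfl
    | succ m ih =>
      have h2 : Subgroup.upperCentralSeries H (i + m + 1) = Subgroup.upperCentralSeries H (i + 1) := by
        ext x
        rw [Subgroup.mem_upperCentralSeries_succ_iff, Subgroup.mem_upperCentralSeries_succ_iff]
        simp only [ih]
      rw [show i + (m + 1) = i + m + 1 from rfl, h2, ← heq]
  have htop : Subgroup.upperCentralSeries H i = ⊤ := by
    have h3 := hstab (Group.nilpotencyClass H - i)
    rw [show i + (Group.nilpotencyClass H - i) = Group.nilpotencyClass H by omega] at h3
    rw [← h3, Subgroup.upperCentralSeries_nilpotencyClass]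
  exact absurd (Subgroup.upperCentralSeries_eq_top_iff_nilpotencyClass_le.mp htop) (by omega)

/-- In a chain of divisors of a prime power, a proper divisor contributes a full factor `p`. -/
lemma dvd_mul_p_aux {p A B m : ℕ} (hp : p.Prime) (hAB : A ∣ B) (hne : A ≠ B)
    (hB : B ∣ p ^ m) : A * p ∣ B := by
  obtain ⟨t, rfl⟩ := hAB
  have ht : t ∣ p ^ m := (dvd_mul_left t A).trans hB
  obtain ⟨s, -, rfl⟩ := (Nat.dvd_prime_pow hp).mp ht
  rcases Nat.eq_zero_or_pos s with rfl | hs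
  · simp at hne
  · exact mul_dvd_mul_left A (dvd_pow_self p (by omega))

/-- The second-from-top quotient of the upper central series of a finite `p`-group of
class at least 2 has order at least `p ^ 2`. -/
lemma top_index_dvd_aux (p : ℕ) (hp : p.Prime) :
    ∀ (k : ℕ) (H : Type u) [Group H] [Finite H] [Group.IsNilpotent H],
      IsPGroup p H → Group.nilpotencyClass H = k → 2 ≤ k →
      p ^ 2 ∣ (Subgroup.upperCentralSeries H (k - 1)).index := by
  intro k
  induction k with
  | zero => intro H _ _ _ _ _ hk; omega
  | succ k ih =>
    intro H _ _ _ hpH hcl hk2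
    by_cases hk : k + 1 = 2
    · -- base case : index of the center
      haveI : Fact p.Prime := ⟨hp⟩
      rw [hk, show (2:ℕ) - 1 = 1 from rfl, Subgroup.upperCentralSeries_one]
      obtain ⟨t, hcardH⟩ := hpH.exists_card_eq
      have hdvd : (Subgroup.center H).index ∣ p ^ t := hcardH ▸ Subgroup.index_dvd_card _
      obtain ⟨s, hs, hids⟩ := (Nat.dvd_prime_pow hp).mp hdvd
      have hnot : ¬ ∀ a b : H, a * b = b * a := by
        intro hab
        have hct : Subgroup.center H = ⊤ := by
          rw [Subgroup.eq_top_iff']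
          intro x
          rw [Subgroup.mem_center_iff]
          intro g
          exact hab g x
        have : Group.nilpotencyClass H ≤ 1 :=
          Subgroup.upperCentralSeries_eq_top_iff_nilpotencyClass_le.mp
            (by rw [Subgroup.upperCentralSeries_one, hct])
        omega
      have hs0 : s ≠ 0 := by
        rintro rfl
        rw [pow_zero] at hids
        have hct := Subgroup.index_eq_one.mp hids
        exact hnot fun a b => by
          have hb : b ∈ Subgroup.center H := hct ▸ Subgroup.mem_top b
          exact Subgroup.mem_center_iff.mp hb a
      have hs1 : s ≠ 1 := by
        rintro rfl
        rw [pow_one] at hids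
        have hq : Nat.card (H ⧸ Subgroup.center H) = p := by
          rw [← Subgroup.index_eq_card]; exact hids
        haveI := isCyclic_of_prime_card hq
        exact hnot (commutative_of_cyclic_center_quotient (QuotientGroup.mk' _)
          (le_of_eq (QuotientGroup.ker_mk' _)))
      rw [hids]
      exact pow_dvd_pow p (by omega)
    · -- inductive step
      have hk2' : 2 ≤ k := by omega
      have hclQ : Group.nilpotencyClass (H ⧸ Subgroup.center H) = k := by
        rw [Group.nilpotencyClass_quotient_center, hcl]
        omega
      have hQ := ih (H ⧸ Subgroup.center H) (hpH.to_quotient _) hclQ hk2'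
      have hcomap := Subgroup.comap_upperCentralSeries_quotient_center (G := H) (k - 1)
      rw [show (k-1).succ = k by omega] at hcomap
      have hidx : (Subgroup.upperCentralSeries (H ⧸ Subgroup.center H) (k-1)).index
          = (Subgroup.upperCentralSeries H k).index := by
        rw [← Subgroup.index_comap_of_surjective _ (QuotientGroup.mk'_surjective _), hcomap]
      rw [show k + 1 - 1 = k by omega, ← hidx]
      exact hQ

end AuxLemmas

/-- If `G` has order `p^n`, coclass 2, and `|Z(G)| = p`, then `|Z₂(G)|` divides `p^3`
(i.e. `|Z₂(G)/Z(G)|` divides `p^2`). -/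
theorem stmt_1 {G : Type*} [Group G] [Finite G] (p n : ℕ) (hp : p.Prime)
    (hcard : Nat.card G = p ^ n)
    [Group.IsNilpotent G] (hclass : Group.nilpotencyClass G + 2 = n)
    (hZ : Nat.card (Subgroup.center G) = p) :
    Nat.card (_root_.upperCentralSeries G 2) ∣ p ^ 3 := by
  show Nat.card (Subgroup.upperCentralSeries G 2) ∣ p ^ 3
  have hp1 : 1 < p := hp.one_lt
  have hpG : IsPGroup p G := IsPGroup.of_card hcard
  set c := Group.nilpotencyClass G with hc
  rcases Nat.lt_or_ge c 2 with hc2 | hc2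
  · -- c ≤ 1 : center is everything, contradiction with |Z| = p
    exfalso
    have htop : Subgroup.upperCentralSeries G 1 = ⊤ :=
      Subgroup.upperCentralSeries_eq_top_iff_nilpotencyClass_le.mpr (by omega)
    rw [Subgroup.upperCentralSeries_one] at htop
    have hpn : p ^ n = p ^ 1 := by
      rw [← hcard, ← Subgroup.card_top, ← htop, hZ, pow_one]
    have := Nat.pow_right_injective (hp.two_le) hpn
    omega
  rcases eq_or_lt_of_le hc2 with hceq | hc3
  · -- c = 2 : show this is impossible
    exfalso
    have hn4 : n = 4 := by omega
    subst hn4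
    -- commutators are central
    have hcomm : ∀ a b : G, a * b * a⁻¹ * b⁻¹ ∈ Subgroup.center G := by
      intro a b
      have htop : Subgroup.upperCentralSeries G 2 = ⊤ :=
        Subgroup.upperCentralSeries_eq_top_iff_nilpotencyClass_le.mpr (by omega)
      have ha : a ∈ Subgroup.upperCentralSeries G 2 := htop ▸ Subgroup.mem_top a
      rw [Subgroup.mem_upperCentralSeries_succ_iff, Subgroup.upperCentralSeries_one] at ha
      exact ha b
    -- every noncentral element has centralizer of order p^3
    have key : ∀ x : G, x ∉ Subgroup.center G →
        Nat.card (Subgroup.centralizer ({x} : Set G)) = p ^ 3 := by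
      intro x hx
      have hmapmul : ∀ g h : G, x * (g * h) * x⁻¹ * (g * h)⁻¹
          = (x * g * x⁻¹ * g⁻¹) * (x * h * x⁻¹ * h⁻¹) := by
        intro g h
        have hzc := Subgroup.mem_center_iff.mp (hcomm x h) g⁻¹
        calc x * (g * h) * x⁻¹ * (g * h)⁻¹
            = (x * g * x⁻¹) * ((x * h * x⁻¹ * h⁻¹) * g⁻¹) := by group
          _ = (x * g * x⁻¹) * (g⁻¹ * (x * h * x⁻¹ * h⁻¹)) := by rw [← hzc]
          _ = (x * g * x⁻¹ * g⁻¹) * (x * h * x⁻¹ * h⁻¹) := by group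
      let φ : G →* Subgroup.center G :=
        { toFun := fun g => ⟨x * g * x⁻¹ * g⁻¹, hcomm x g⟩
          map_one' := by ext; simp
          map_mul' := fun g h => by ext; exact hmapmul g h }
      have hcommut : ∀ g : G, x * g * x⁻¹ * g⁻¹ = 1 ↔ x * g = g * x := by
        intro g
        rw [show x * g * x⁻¹ * g⁻¹ = (x * g) * (g * x)⁻¹ by group, mul_inv_eq_one]
      have hker : φ.ker = Subgroup.centralizer ({x} : Set G) := by
        ext g
        rw [MonoidHom.mem_ker, Subgroup.mem_centralizer_iff]
        simp only [Set.mem_singleton_iff, forall_eq]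
        rw [Subtype.ext_iff]
        exact hcommut g
      -- the range of φ has order p
      have hrdvd : Nat.card φ.range ∣ p := by
        rw [← hZ]; exact Subgroup.card_subgroup_dvd_card φ.range
      have hrne : Nat.card φ.range ≠ 1 := by
        intro h1
        have hbot := Subgroup.card_eq_one.mp h1
        obtain ⟨g, hg⟩ : ∃ g : G, ¬ g * x = x * g := by
          by_contra hall
          push_neg at hall
          exact hx (Subgroup.mem_center_iff.mpr hall)
        have : φ g ∈ φ.range := ⟨g, rfl⟩
        rw [hbot, Subgroup.mem_bot] at this
        have := congrArg Subtype.val this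
        simp only [φ] at this
        exact hg (((hcommut g).mp this).symm)
      have hrcard : Nat.card φ.range = p :=
        ((Nat.Prime.eq_one_or_self_of_dvd hp _ hrdvd).resolve_left hrne)
      -- |G| = |G/ker| * |ker| and |G/ker| = |range|
      have hiso : Nat.card (G ⧸ φ.ker) = p :=
        (Nat.card_congr (QuotientGroup.quotientKerEquivRange φ).toEquiv).trans hrcard
      have hmul : Nat.card G = Nat.card (G ⧸ φ.ker) * Nat.card φ.ker :=
        Subgroup.card_eq_card_quotient_mul_card_subgroup φ.ker
      rw [hcard, hiso, hker] at hmul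
      have : p * p ^ 3 = p * Nat.card (Subgroup.centralizer ({x} : Set G)) := by
        rw [← hmul]; ring
      exact (Nat.eq_of_mul_eq_mul_left hp.pos this).symm
    -- center is proper
    have hcent_ne_top : Subgroup.center G ≠ ⊤ := by
      intro h
      rw [h, Subgroup.card_top, hcard] at hZ
      have : p ^ 4 = p ^ 1 := by rw [hZ, pow_one]
      have := Nat.pow_right_injective (hp.two_le) this
      omega
    obtain ⟨x, hx⟩ : ∃ x : G, x ∉ Subgroup.center G := by
      by_contra hall
      push_neg at hall
      exact hcent_ne_top ((Subgroup.eq_top_iff' _).mpr hall)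
    set C := Subgroup.centralizer ({x} : Set G) with hCdef
    have hCcard : Nat.card C = p ^ 3 := key x hx
    have hcentle : ∀ y : G, Subgroup.center G ≤ Subgroup.centralizer ({y} : Set G) := by
      intro y z hz
      rw [Subgroup.mem_centralizer_iff]
      simp only [Set.mem_singleton_iff, forall_eq]
      exact Subgroup.mem_center_iff.mp hz y
    by_cases habel : ∀ a ∈ C, ∀ b ∈ C, a * b = b * a
    · -- abelian centralizer case
      have hCne : C ≠ ⊤ := by
        intro h
        rw [h, Subgroup.card_top, hcard] at hCcard
        have := Nat.pow_right_injective (hp.two_le) hCcard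
        omega
      obtain ⟨b, hb⟩ : ∃ b : G, b ∉ C := by
        by_contra hall
        push_neg at hall
        exact hCne ((Subgroup.eq_top_iff' _).mpr hall)
      have hbnc : b ∉ Subgroup.center G := fun h => hb (hcentle x h)
      set Cb := Subgroup.centralizer ({b} : Set G) with hCbdef
      have hCbcard : Nat.card Cb = p ^ 3 := key b hbnc
      -- indices
      have hCidx : C.index = p := by
        have := Subgroup.card_mul_index C
        rw [hCcard, hcard] at this
        have h4 : p ^ 3 * C.index = p ^ 3 * p := by rw [this]; ring
        exact Nat.eq_of_mul_eq_mul_left (pow_pos hp.pos 3) h4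
      have hCbidx : Cb.index = p := by
        have := Subgroup.card_mul_index Cb
        rw [hCbcard, hcard] at this
        have h4 : p ^ 3 * Cb.index = p ^ 3 * p := by rw [this]; ring
        exact Nat.eq_of_mul_eq_mul_left (pow_pos hp.pos 3) h4
      have hinfidx : (C ⊓ Cb).index ≤ p ^ 2 := by
        have := Subgroup.index_inf_le (H := C) (K := Cb)
        rw [hCidx, hCbidx] at this
        simpa [sq] using this
      have hinfcard : p ^ 2 ≤ Nat.card (C ⊓ Cb : Subgroup G) := by
        have hmi := Subgroup.card_mul_index (C ⊓ Cb)
        rw [hcard] at hmi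
        by_contra hlt
        push_neg at hlt
        have : Nat.card (C ⊓ Cb : Subgroup G) * (C ⊓ Cb).index < p ^ 2 * p ^ 2 := by
          have hpos : 0 < (C ⊓ Cb).index := by
            rcases Nat.eq_zero_or_pos (C ⊓ Cb).index with h0 | h
            · rw [h0, mul_zero] at hmi
              exact absurd hmi.symm (by positivity)
            · exact h
          calc Nat.card (C ⊓ Cb : Subgroup G) * (C ⊓ Cb).index
              < p ^ 2 * (C ⊓ Cb).index := by
                exact Nat.mul_lt_mul_of_lt_of_le hlt le_rfl hpos
            _ ≤ p ^ 2 * p ^ 2 := Nat.mul_le_mul_left _ hinfidx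
        rw [hmi] at this
        have : p ^ 4 < p ^ 4 := by
          calc p ^ 4 = p ^ 2 * p ^ 2 := by ring
            _ > p ^ 4 := this
        omega
      -- find a noncentral element of the intersection
      have hnotle : ¬ (C ⊓ Cb ≤ Subgroup.center G) := by
        intro hle
        have := Subgroup.card_le_of_le hle
        rw [hZ] at this
        have h2 : p ^ 2 ≤ p := le_trans hinfcard this
        nlinarith
      obtain ⟨a, ha, hanc⟩ : ∃ a : G, a ∈ C ⊓ Cb ∧ a ∉ Subgroup.center G := by
        by_contra hall
        push_neg at hall
        exact hnotle hall
      have haC : a ∈ C := ha.1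
      have haCb : a ∈ Cb := ha.2
      -- centralizer of a contains C and b
      have hCle : C ≤ Subgroup.centralizer ({a} : Set G) := by
        intro g hg
        rw [Subgroup.mem_centralizer_iff]
        simp only [Set.mem_singleton_iff, forall_eq]
        exact habel a haC g hg
      have hacard : Nat.card (Subgroup.centralizer ({a} : Set G)) = p ^ 3 := key a hanc
      have hCeq : C = Subgroup.centralizer ({a} : Set G) :=
        Subgroup.eq_of_le_of_card_ge hCle (by rw [hacard, hCcard])
      have hbmem : b ∈ Subgroup.centralizer ({a} : Set G) := by
        rw [Subgroup.mem_centralizer_iff]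
        simp only [Set.mem_singleton_iff, forall_eq]
        have := Subgroup.mem_centralizer_iff.mp haCb
        simp only [Set.mem_singleton_iff, forall_eq] at this
        exact this.symm
      exact hb (hCeq ▸ hbmem)
    · -- nonabelian centralizer case
      push_neg at habel
      -- the center of ↥C contains the image of x and of center G, so has order ≥ p^2
      have hxC : x ∈ C := by
        rw [Subgroup.mem_centralizer_iff]
        simp only [Set.mem_singleton_iff, forall_eq]
      set Z' := Subgroup.center ↥C with hZ'def
      have hxZ' : (⟨x, hxC⟩ : ↥C) ∈ Z' := by
        rw [Subgroup.mem_center_iff]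
        intro c
        have := Subgroup.mem_centralizer_iff.mp c.2
        simp only [Set.mem_singleton_iff, forall_eq] at this
        exact Subtype.ext this.symm
      set E := (Subgroup.center G).comap C.subtype with hEdef
      have hEle : E ≤ Z' := by
        intro c hc
        rw [Subgroup.mem_center_iff]
        intro d
        exact Subtype.ext (Subgroup.mem_center_iff.mp hc d.1)
      have hEcard : Nat.card E = p := by
        rw [← hZ]
        exact Nat.card_congr (Subgroup.subgroupOfEquivOfLe (hcentle x)).toEquiv
      have hxE : (⟨x, hxC⟩ : ↥C) ∉ E := by
        intro h
        exact hx (Subgroup.mem_comap.mp h)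
      have hEne : E ≠ Z' := fun h => hxE (h ▸ hxZ')
      have hZ'dvd : Nat.card Z' ∣ p ^ 3 := by
        rw [← hCcard]
        exact Subgroup.card_subgroup_dvd_card Z'
      have hstep : Nat.card E * p ∣ Nat.card Z' :=
        dvd_mul_p_aux hp (Subgroup.card_dvd_of_le hEle)
          (fun h => hEne (Subgroup.eq_of_le_of_card_ge hEle (le_of_eq h.symm))) hZ'dvd
      rw [hEcard] at hstep
      -- Nat.card Z' is p^2 or p^3; both lead to C abelian, contradiction
      obtain ⟨s, hs3, hscard⟩ := (Nat.dvd_prime_pow hp).mp hZ'dvd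
      have hs2 : 2 ≤ s := by
        by_contra hlt
        push_neg at hlt
        interval_cases s
        · rw [pow_zero] at hscard
          rw [hscard] at hstep
          have := Nat.le_of_dvd Nat.one_pos hstep
          nlinarith
        · rw [pow_one] at hscard
          rw [hscard] at hstep
          have := Nat.le_of_dvd hp.pos hstep
          nlinarith
      have hCab : ∀ u v : ↥C, u * v = v * u := by
        rcases eq_or_lt_of_le hs2 with h2 | h3
        · -- |Z'| = p^2 : quotient has order p, hence cyclic
          have hcard2 : Nat.card Z' = p ^ 2 := by rw [hscard, ← h2]
          have hZidx : Z'.index = p := by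
            have := Subgroup.card_mul_index Z'
            rw [hcard2, hCcard] at this
            have h4 : p ^ 2 * Z'.index = p ^ 2 * p := by rw [this]; ring
            exact Nat.eq_of_mul_eq_mul_left (pow_pos hp.pos 2) h4
          haveI : Fact p.Prime := ⟨hp⟩
          have hq : Nat.card (↥C ⧸ Z') = p := by
            rw [← Subgroup.index_eq_card]; exact hZidx
          haveI := isCyclic_of_prime_card hq
          exact commutative_of_cyclic_center_quotient (QuotientGroup.mk' _)
            (le_of_eq (QuotientGroup.ker_mk' _))
        · -- |Z'| = p^3 : Z' = ⊤
          have hs3' : s = 3 := by omega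
          have hcard3 : Nat.card Z' = p ^ 3 := by rw [hscard, hs3']
          have hZtop : Z' = ⊤ := Subgroup.eq_top_of_card_eq _ (by rw [hcard3, hCcard])
          intro u v
          have hu : u ∈ Z' := hZtop ▸ Subgroup.mem_top u
          exact (Subgroup.mem_center_iff.mp hu v).symm
      obtain ⟨a, haC, b, hbC, hab⟩ := habel
      exact hab (congrArg Subtype.val (hCab ⟨a, haC⟩ ⟨b, hbC⟩))
  · -- c ≥ 3 : counting argument
    have hchain : ∀ d, 2 + d ≤ c →
        Nat.card (Subgroup.upperCentralSeries G 2) * p ^ d ∣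
          Nat.card (Subgroup.upperCentralSeries G (2 + d)) := by
      intro d
      induction d with
      | zero => intro _; simp
      | succ d ih =>
        intro hd
        have ihd := ih (by omega)
        have hle : Subgroup.upperCentralSeries G (2 + d) ≤ Subgroup.upperCentralSeries G (2 + d + 1) :=
          Subgroup.upperCentralSeries_mono G (by omega)
        have hne : Subgroup.upperCentralSeries G (2 + d) ≠ Subgroup.upperCentralSeries G (2 + d + 1) :=
          ucs_strict_aux (by omega)
        have hdvd2 : Nat.card (Subgroup.upperCentralSeries G (2 + d + 1)) ∣ p ^ n := by
          rw [← hcard]; exact Subgroup.card_subgroup_dvd_card _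
        have hstep : Nat.card (Subgroup.upperCentralSeries G (2 + d)) * p ∣
            Nat.card (Subgroup.upperCentralSeries G (2 + d + 1)) := by
          apply dvd_mul_p_aux hp (Subgroup.card_dvd_of_le hle) _ hdvd2
          intro h
          exact hne (Subgroup.eq_of_le_of_card_ge hle (le_of_eq h.symm))
        calc Nat.card (Subgroup.upperCentralSeries G 2) * p ^ (d + 1)
            = (Nat.card (Subgroup.upperCentralSeries G 2) * p ^ d) * p := by ring
          _ ∣ Nat.card (Subgroup.upperCentralSeries G (2 + d)) * p := mul_dvd_mul_right ihd p
          _ ∣ Nat.card (Subgroup.upperCentralSeries G (2 + d + 1)) := hstep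
    have hchain' := hchain (c - 3) (by omega)
    rw [show 2 + (c - 3) = c - 1 by omega] at hchain'
    have htopidx : p ^ 2 ∣ (Subgroup.upperCentralSeries G (c - 1)).index :=
      top_index_dvd_aux p hp c G hpG rfl (by omega)
    have hfull : Nat.card (Subgroup.upperCentralSeries G 2) * p ^ (c - 3) * p ^ 2 ∣ p ^ n := by
      rw [← hcard, ← Subgroup.card_mul_index (Subgroup.upperCentralSeries G (c - 1))]
      exact mul_dvd_mul hchain' htopidx
    rw [mul_assoc, ← pow_add, show c - 3 + 2 = c - 1 by omega] at hfull
    obtain ⟨a, _, hacard⟩ := (Nat.dvd_prime_pow hp).mp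
      (hcard ▸ Subgroup.card_subgroup_dvd_card (Subgroup.upperCentralSeries G 2))
    rw [hacard, ← pow_add] at hfull
    have hle := (Nat.pow_dvd_pow_iff_le_right hp1).mp hfull
    rw [hacard]
    exact pow_dvd_pow p (by omega)
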